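/- Let (∘, ⟨·,·⟩, E) be a Frobenius structure of charge D on M, and n a global vector field with n^{∘d} = 0, n^{∘(d−1)} ≠ 0, [E,n] = 0, ∇(n∘x) = n∘∇x. For k ≥ 1 and x, y sections of I_k/I_{k−1} with representatives x̃, ỹ ∈ Γ(J_k), the pairing (x,y)_k = ⟨x̃, ỹ∘n^{∘(k−1)}⟩ satisfies the Euler condition E(x,y)_k − ([E,x]_k, y)_k − (x, [E,y]_k)_k = (1 − D + k)(x,y)_k. For k = 0 and x = n∘x̃, y ∈ Γ(I) with (x,y)_0 = ⟨x̃, y⟩, one has E(x,y)_0 − ([E,x],y)_0 − (x,[E,y])_0 = (1−D)(x,y)_0. -/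

import Mathlib

/-- `opow mul e n k` is the `k`-fold `∘`-power `n^{∘k}` (with `n^{∘0} = e`, the
unit vector field). -/
def opow {Θ : Type*} (mul : Θ → Θ → Θ) (e n : Θ) : ℕ → Θ
  | 0 => e
  | k + 1 => mul n (opow mul e n k)

/-- Euler condition for the pairings of the nilpotent
construction.  For a Frobenius structure `(∘, g, E)` of charge `D` (modelled
algebraically) with a nilpotent vector field `n` (`n^{∘d} = 0`,
`n^{∘(d−1)} ≠ 0`, `[E,n] = 0`, `∇(n∘x) = n∘∇x`):
for `k ≥ 1` and the pairing `(x,y)_k = ⟨x̃, ỹ∘n^{∘(k−1)}⟩` one has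
`E(x,y)_k − ([E,x]_k,y)_k − (x,[E,y]_k)_k = (1 − D + k)(x,y)_k`, and for `k = 0`
with `(n∘x̃, y)₀ = ⟨x̃, y⟩` (and `[E, n∘ỹ] = n∘([E,ỹ] + ỹ)`) one has
`E(x,y)₀ − ([E,x],y)₀ − (x,[E,y])₀ = (1−D)(x,y)₀`. -/
theorem stmt14 {O : Type*} [CommRing O] [Algebra ℂ O]
    {Θ : Type*} [AddCommGroup Θ] [Module O Θ]
    (act : Θ → O → O) (br : Θ → Θ → Θ) (mul : Θ → Θ → Θ)
    (g : Θ → Θ → O) (conn : Θ → Θ → Θ)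
    (e E n : Θ) (D : ℂ) (d : ℕ)
    -- Frobenius structure axioms
    (hmulcomm : ∀ x y, mul x y = mul y x)
    (hmulassoc : ∀ x y z, mul (mul x y) z = mul x (mul y z))
    (hunit : ∀ x, mul e x = x)
    (hmuladd : ∀ x y z, mul x (y + z) = mul x y + mul x z)
    (hbradd : ∀ x y z, br x (y + z) = br x y + br x z)
    (hgadd1 : ∀ x y z, g (x + y) z = g x z + g y z)
    (hgadd2 : ∀ x y z, g x (y + z) = g x y + g x z)
    (hgsymm : ∀ x y, g x y = g y x)
    (hgfrob : ∀ x y z, g (mul x y) z = g x (mul y z))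
    (hE1 : ∀ x y, br E (mul x y) = mul (br E x) y + mul x (br E y) + mul x y)
    (hE3 : ∀ x y, act E (g x y) - g (br E x) y - g x (br E y)
      = algebraMap ℂ O (2 - D) * g x y)
    -- the nilpotent vector field
    (hnil : opow mul e n d = 0) (hne : opow mul e n (d - 1) ≠ 0) (hd : 1 ≤ d)
    (hEn : br E n = 0)
    (hconn_n : ∀ z x, conn z (mul n x) = mul n (conn z x)) :
    -- the case k ≥ 1 (on representatives x, y ∈ Γ(J_k))
    (∀ k : ℕ, 1 ≤ k → k ≤ d → ∀ x y : Θ,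
      act E (g x (mul y (opow mul e n (k - 1))))
          - g (br E x) (mul y (opow mul e n (k - 1)))
          - g x (mul (br E y) (opow mul e n (k - 1)))
        = algebraMap ℂ O (1 - D + (k : ℂ)) * g x (mul y (opow mul e n (k - 1)))) ∧
    -- the case k = 0 (with x = n∘x̃, y = n∘ỹ, [E,y] = n∘([E,ỹ]+ỹ))
    (∀ x y : Θ,
      act E (g x (mul n y)) - g (br E x + x) (mul n y)
          - g x (mul n (br E y + y))
        = algebraMap ℂ O (1 - D) * g x (mul n y)) := by

  -- mul and g kill zero / negation
  have hmul0 : ∀ x : Θ, mul x (0:Θ) = 0 := by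
    intro x
    have h := hmuladd x 0 0
    rw [add_zero] at h
    exact right_eq_add.mp h
  have hg0 : ∀ x : Θ, g x (0:Θ) = 0 := by
    intro x
    have h := hgadd2 x 0 0
    rw [add_zero] at h
    exact right_eq_add.mp h
  have hgneg : ∀ x y : Θ, g x (-y) = -g x y := by
    intro x y
    have h := hgadd2 x y (-y)
    rw [add_neg_cancel, hg0] at h
    linear_combination -h
  -- bracket of Euler with unit
  have hEe : br E e = -e := by
    have h := hE1 e e
    rw [hunit, hunit, hmulcomm (br E e) e, hunit] at h
    -- h : br E e = br E e + br E e + e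
    have h2 : br E e + (br E e + e) = br E e + 0 := by
      rw [add_zero]; conv_rhs => rw [h]
      abel
    exact eq_neg_of_add_eq_zero_left (add_left_cancel h2)
  -- key lemma: g w [E, n^{∘j}] = (j-1) g w n^{∘j}
  have key : ∀ (j : ℕ) (w : Θ),
      g w (br E (opow mul e n j)) = algebraMap ℂ O ((j:ℂ) - 1) * g w (opow mul e n j) := by
    intro j
    induction j with
    | zero =>
        intro w
        simp only [opow, hEe, hgneg, Nat.cast_zero, zero_sub]
        rw [map_neg, map_one, neg_one_mul]
    | succ j ih =>
        intro w
        have hb : br E (opow mul e n (j+1))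
            = mul n (br E (opow mul e n j)) + opow mul e n (j+1) := by
          have h := hE1 n (opow mul e n j)
          rw [hEn, hmulcomm (0:Θ) _, hmul0, zero_add] at h
          exact h
        rw [hb, hgadd2]
        have h1 : g w (mul n (br E (opow mul e n j)))
            = g (mul w n) (br E (opow mul e n j)) := (hgfrob w n _).symm
        have h2 : g (mul w n) (opow mul e n j) = g w (opow mul e n (j+1)) := hgfrob w n _
        rw [h1, ih (mul w n), h2]
        have hc : algebraMap ℂ O (((j:ℕ)+1:ℕ) - 1 : ℂ)
            = algebraMap ℂ O ((j:ℂ) - 1) + 1 := by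
          rw [show (((j:ℕ)+1:ℕ) : ℂ) - 1 = ((j:ℂ) - 1) + 1 by push_cast; ring,
            map_add, map_one]
        rw [hc]
        ring
  constructor
  · intro k hk hkd x y
    set p := opow mul e n (k - 1) with hp
    have h3 := hE3 x (mul y p)
    have hb := hE1 y p
    have hgb : g x (br E (mul y p))
        = g x (mul (br E y) p) + g x (mul y (br E p)) + g x (mul y p) := by
      rw [hb, hgadd2, hgadd2]
    have hf : g x (mul y (br E p)) = g (mul x y) (br E p) := (hgfrob x y _).symm
    have hkey := key (k-1) (mul x y)
    have hcast : (((k-1:ℕ)) : ℂ) = (k:ℂ) - 1 := by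
      push_cast [Nat.cast_sub hk]; ring
    rw [hcast] at hkey
    have hf2 : g (mul x y) p = g x (mul y p) := hgfrob x y _
    have halg : algebraMap ℂ O (1 - D + (k:ℂ))
        = algebraMap ℂ O (2-D) + algebraMap ℂ O ((k:ℂ)-1-1) + 1 := by
      rw [show (1 - D + (k:ℂ)) = (2-D) + ((k:ℂ)-1-1) + 1 by ring, map_add, map_add, map_one]
    rw [halg]
    linear_combination h3 + hgb + hf + hkey + (algebraMap ℂ O ((k:ℂ)-1-1)) * hf2
  · intro x y
    have h3 := hE3 x (mul n y)
    have hb : br E (mul n y) = mul n (br E y) + mul n y := by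
      have h := hE1 n y
      rw [hEn, hmulcomm (0:Θ) y, hmul0, zero_add] at h
      exact h
    have hgb : g x (br E (mul n y)) = g x (mul n (br E y)) + g x (mul n y) := by
      rw [hb, hgadd2]
    have hga : g (br E x + x) (mul n y) = g (br E x) (mul n y) + g x (mul n y) :=
      hgadd1 _ _ _
    have hgm : g x (mul n (br E y + y)) = g x (mul n (br E y)) + g x (mul n y) := by
      rw [hmuladd, hgadd2]
    have halg : algebraMap ℂ O (1 - D) = algebraMap ℂ O (2-D) - 1 := by
      rw [show (1 - D : ℂ) = (2-D) - 1 by ring, map_sub, map_one]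
    rw [halg]
    linear_combination h3 + hgb - hga - hgm
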